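/- Let κ ∈ ℝ with κ ≠ 1 and ϱ₀ > 0, and let c, s : (0,∞)² → ℝ be positively homogeneous of degree κ, i.e. c(Aδ, Aη) = A^κ c(δ,η) and s(Aδ, Aη) = A^κ s(δ,η) for all A > 0 and all (δ,η) ∈ (0,∞)². Suppose δ, η : (0,∞) → (0,∞) are differentiable and satisfy, for all r > 0, the static Newtonian elastic equations: c(δ(r),η(r))·δ'(r) = (3/r)·s(δ(r),η(r))·(η(r) − δ(r)) − (4πϱ₀/3)·η(r)·δ(r)·r and η'(r) = −(3/r)(η(r) − δ(r)). Then for every A > 0 the rescaled functions δ_A(r) := A^{2/(1−κ)}δ(Ar) and η_A(r) := A^{2/(1−κ)}η(Ar) satisfy the same two equations for all r > 0. -/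

import Mathlib

open Real Set

/-- Proposition (homology theorem for static Newtonian elastic balls): if the squared
longitudinal wave speed `c` and the shear function `s` are positively homogeneous of
degree `κ ≠ 1`, and `(δ, η)` solves the static Newtonian elastic equations, then for
every `A > 0` the rescaled profiles `δ_A(r) = A^{2/(1−κ)}δ(Ar)`,
`η_A(r) = A^{2/(1−κ)}η(Ar)` solve the same equations. -/
theorem elastic_newtonian_homology
    (κ ϱ₀ : ℝ) (hκ : κ ≠ 1) (hϱ₀ : 0 < ϱ₀)
    (c s : ℝ × ℝ → ℝ)
    (hc : ∀ A > (0 : ℝ), ∀ x : ℝ × ℝ, 0 < x.1 → 0 < x.2 →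
      c (A * x.1, A * x.2) = A ^ κ * c x)
    (hs : ∀ A > (0 : ℝ), ∀ x : ℝ × ℝ, 0 < x.1 → 0 < x.2 →
      s (A * x.1, A * x.2) = A ^ κ * s x)
    (δ η : ℝ → ℝ)
    (hδpos : ∀ r > (0 : ℝ), 0 < δ r) (hηpos : ∀ r > (0 : ℝ), 0 < η r)
    (hδdiff : ∀ r > (0 : ℝ), DifferentiableAt ℝ δ r)
    (hδeq : ∀ r > (0 : ℝ), c (δ r, η r) * deriv δ r
      = (3 / r) * s (δ r, η r) * (η r - δ r) - (4 * π * ϱ₀ / 3) * η r * δ r * r)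
    (hηd : ∀ r > (0 : ℝ), HasDerivAt η (-(3 / r) * (η r - δ r)) r) :
    ∀ A > (0 : ℝ),
      (∀ r > (0 : ℝ),
        DifferentiableAt ℝ (fun r' => A ^ (2 / (1 - κ)) * δ (A * r')) r) ∧
      (∀ r > (0 : ℝ),
        c (A ^ (2 / (1 - κ)) * δ (A * r), A ^ (2 / (1 - κ)) * η (A * r)) *
            deriv (fun r' => A ^ (2 / (1 - κ)) * δ (A * r')) r
          = (3 / r) * s (A ^ (2 / (1 - κ)) * δ (A * r), A ^ (2 / (1 - κ)) * η (A * r)) *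
              (A ^ (2 / (1 - κ)) * η (A * r) - A ^ (2 / (1 - κ)) * δ (A * r))
            - (4 * π * ϱ₀ / 3) * (A ^ (2 / (1 - κ)) * η (A * r)) *
              (A ^ (2 / (1 - κ)) * δ (A * r)) * r) ∧
      (∀ r > (0 : ℝ),
        HasDerivAt (fun r' => A ^ (2 / (1 - κ)) * η (A * r'))
          (-(3 / r) * (A ^ (2 / (1 - κ)) * η (A * r) - A ^ (2 / (1 - κ)) * δ (A * r))) r) := by
  intro A hA
  have hBpos : (0:ℝ) < A ^ (2 / (1 - κ)) := Real.rpow_pos_of_pos hA _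
  set B := A ^ (2 / (1 - κ)) with hB
  have h1κ : (1 : ℝ) - κ ≠ 0 := sub_ne_zero.mpr (Ne.symm hκ)
  have hkey : A * A * B ^ κ = B := by
    have h2 : A * A = A ^ (2 : ℝ) := by rw [Real.rpow_two]; ring
    rw [hB, ← Real.rpow_mul hA.le, h2, ← Real.rpow_add hA]
    congr 1
    field_simp
    ring
  have hlin : ∀ r : ℝ, HasDerivAt (fun r' => A * r') A r := fun r => by
    simpa using (hasDerivAt_id r).const_mul A
  have hδd : ∀ r > (0 : ℝ), HasDerivAt (fun r' => B * δ (A * r'))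
      (B * (A * deriv δ (A * r))) r := by
    intro r hr
    have hAr : 0 < A * r := mul_pos hA hr
    have h := (((hδdiff (A * r) hAr).hasDerivAt).comp r (hlin r)).const_mul B
    rw [show B * (A * deriv δ (A * r)) = B * (deriv δ (A * r) * A) by ring]
    exact h
  refine ⟨fun r hr => (hδd r hr).differentiableAt, fun r hr => ?_, fun r hr => ?_⟩
  · have hAr : 0 < A * r := mul_pos hA hr
    rw [(hδd r hr).deriv, hc B hBpos (δ (A * r), η (A * r)) (hδpos _ hAr) (hηpos _ hAr),
      hs B hBpos (δ (A * r), η (A * r)) (hδpos _ hAr) (hηpos _ hAr)]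
    have horig := hδeq (A * r) hAr
    have horig' : A * (c (δ (A * r), η (A * r)) * deriv δ (A * r))
        = 3 / r * s (δ (A * r), η (A * r)) * (η (A * r) - δ (A * r))
          - (4 * π * ϱ₀ / 3) * η (A * r) * δ (A * r) * (A * A * r) := by
      rw [horig]
      field_simp
    linear_combination (B ^ κ * B) * horig'
      - ((4 * π * ϱ₀ / 3) * B * η (A * r) * δ (A * r) * r) * hkey
  · have hAr : 0 < A * r := mul_pos hA hr
    have h := ((hηd (A * r) hAr).comp r (hlin r)).const_mul B
    have heq : -(3 / r) * (B * η (A * r) - B * δ (A * r))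
        = B * (-(3 / (A * r)) * (η (A * r) - δ (A * r)) * A) := by
      have h3 : (3:ℝ) / (A * r) * A = 3 / r := by
        field_simp
      linear_combination (B * (η (A * r) - δ (A * r))) * h3
    rw [heq]
    exact h
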